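/- Let X be a regular topological space with a point-countable base 𝓑, and suppose {N ∈ [X]^{<ℵ₁} : closure(N) \ N ≠ ∅} is stationary in [X]^{<ℵ₁}. Fix F choosing F(N) ∈ closure(N) \ N. Then for every stationary S ⊆ {N ∈ [X]^{<ℵ₁} : closure(N) \ N ≠ ∅} and every n ∈ ω (with U_{x,n} an enumeration of basic neighborhoods of x), there exists a basic open set U such that {N ∈ S : U = U_{F(N),n}} is stationary in [X]^{<ℵ₁}. -/

import Mathlib

/-- `smallSubsets A` is `[A]^{<ℵ₁}`, the collection of countable subsets of `A`. -/
def smallSubsets {γ : Type*} (A : Set γ) : Set (Set γ) :=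
  {M | M ⊆ A ∧ M.Countable}

/-- `C` is a club in `[A]^{<ℵ₁}`: a family of countable subsets of `A` that is
cofinal and closed under unions of countable increasing chains. -/
def IsClubIn {γ : Type*} (A : Set γ) (C : Set (Set γ)) : Prop :=
  C ⊆ smallSubsets A ∧
  (∀ N ∈ smallSubsets A, ∃ M ∈ C, N ⊆ M) ∧
  (∀ D : Set (Set γ), D ⊆ C → D.Nonempty → D.Countable → IsChain (· ⊆ ·) D →
    ⋃₀ D ∈ C)

/-- `S` is stationary in `[A]^{<ℵ₁}`: a family of countable subsets of `A`
meeting every club in `[A]^{<ℵ₁}`. -/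
def IsStationaryIn {γ : Type*} (A : Set γ) (S : Set (Set γ)) : Prop :=
  S ⊆ smallSubsets A ∧ ∀ C : Set (Set γ), IsClubIn A C → (S ∩ C).Nonempty

section aux
variable {γ : Type*} {A : Set γ}

lemma small_club : IsClubIn A (smallSubsets A) := by
  refine ⟨subset_rfl, fun N hN => ⟨N, hN, subset_rfl⟩, ?_⟩
  intro D hD hne hcnt _
  exact ⟨Set.sUnion_subset fun N hN => (hD hN).1,
    Set.Countable.sUnion hcnt fun N hN => (hD hN).2⟩

lemma image_chain {M : ℕ → Set γ} (hM : Monotone M) (s : Set ℕ)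
    (hs : ∀ i, ∃ j ∈ s, i ≤ j) :
    (M '' s).Nonempty ∧ (M '' s).Countable ∧ IsChain (· ⊆ ·) (M '' s) ∧
      ⋃₀ (M '' s) = ⋃ i, M i := by
  obtain ⟨j0, hj0, _⟩ := hs 0
  refine ⟨⟨M j0, Set.mem_image_of_mem M hj0⟩, (s.to_countable).image M, ?_, ?_⟩
  · rintro _ ⟨a, ha, rfl⟩ _ ⟨b, hb, rfl⟩ _
    rcases le_total a b with h | h
    · exact Or.inl (hM h)
    · exact Or.inr (hM h)
  · apply subset_antisymm
    · exact Set.sUnion_subset (by rintro _ ⟨a, _, rfl⟩; exact Set.subset_iUnion M a)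
    · intro x hx
      obtain ⟨i, hi⟩ := Set.mem_iUnion.mp hx
      obtain ⟨j, hj, hij⟩ := hs i
      exact ⟨M j, Set.mem_image_of_mem M hj, hM hij hi⟩

lemma club_iInter (C : ℕ → Set (Set γ)) (hC : ∀ k, IsClubIn A (C k)) :
    IsClubIn A (⋂ k, C k) := by
  refine ⟨fun N hN => (hC 0).1 (Set.mem_iInter.mp hN 0), ?_, ?_⟩
  · intro N hN
    have key : ∀ k : ℕ, ∀ P : Set γ, ∃ Q : Set γ,
        P ∈ smallSubsets A → Q ∈ C k ∧ P ⊆ Q := by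
      intro k P
      by_cases h : P ∈ smallSubsets A
      · obtain ⟨Q, hQ1, hQ2⟩ := (hC k).2.1 P h
        exact ⟨Q, fun _ => ⟨hQ1, hQ2⟩⟩
      · exact ⟨P, fun h' => absurd h' h⟩
    choose ext hext using key
    let M : ℕ → Set γ := fun i =>
      Nat.rec (ext (Nat.unpair 0).1 N) (fun i Mi => ext (Nat.unpair (i+1)).1 Mi) i
    have hM0 : M 0 = ext (Nat.unpair 0).1 N := rfl
    have hMs : ∀ i, M (i+1) = ext (Nat.unpair (i+1)).1 (M i) := fun i => rfl
    have hMmem : ∀ i, M i ∈ C (Nat.unpair i).1 := by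
      intro i
      induction i with
      | zero => exact (hext _ N hN).1
      | succ i ih =>
        rw [hMs]
        exact (hext _ (M i) ((hC _).1 ih)).1
    have hMsub : ∀ i, M i ⊆ M (i+1) := by
      intro i
      rw [hMs]
      exact (hext _ (M i) ((hC _).1 (hMmem i))).2
    have hMmono : Monotone M := monotone_nat_of_le_succ hMsub
    refine ⟨⋃ i, M i, ?_, ?_⟩
    · rw [Set.mem_iInter]
      intro k
      have hs : ∀ i, ∃ j ∈ {j | (Nat.unpair j).1 = k}, i ≤ j := by
        intro i
        refine ⟨Nat.pair k i, by simp [Nat.unpair_pair], Nat.right_le_pair k i⟩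
      obtain ⟨h1, h2, h3, h4⟩ := image_chain hMmono _ hs
      have := (hC k).2.2 _ ?_ h1 h2 h3
      · rwa [h4] at this
      · rintro _ ⟨j, hj, rfl⟩
        have := hMmem j
        rwa [hj] at this
    · exact subset_trans (hext _ N hN).2 (Set.subset_iUnion M 0)
  · intro D hD hne hcnt hchain
    rw [Set.mem_iInter]
    intro k
    exact (hC k).2.2 D (fun N hN => Set.mem_iInter.mp (hD hN) k) hne hcnt hchain

lemma club_inter_family (C : γ → Set (Set γ)) (hC : ∀ x, IsClubIn A (C x))
    (P : Set γ) (hP : P.Countable) :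
    ∃ D, IsClubIn A D ∧ ∀ x ∈ P, D ⊆ C x := by
  rcases P.eq_empty_or_nonempty with rfl | hne
  · exact ⟨smallSubsets A, small_club, by simp⟩
  · obtain ⟨g, hg⟩ := Set.Countable.exists_eq_range hP hne
    refine ⟨⋂ k, C (g k), club_iInter _ (fun k => hC (g k)), ?_⟩
    intro x hx
    rw [hg] at hx
    obtain ⟨k, rfl⟩ := hx
    exact Set.iInter_subset _ k

lemma sUnion_upper_chain {D : Set (Set γ)} (hchain : IsChain (· ⊆ ·) D)
    {N₀ : Set γ} (hN₀ : N₀ ∈ D) :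
    ⋃₀ {N ∈ D | N₀ ⊆ N} = ⋃₀ D := by
  apply subset_antisymm
  · exact Set.sUnion_subset_sUnion (fun N hN => hN.1)
  · intro x hx
    obtain ⟨N, hN, hxN⟩ := hx
    by_cases h : N = N₀
    · exact ⟨N₀, ⟨hN₀, subset_rfl⟩, h ▸ hxN⟩
    · rcases hchain hN hN₀ h with h' | h'
      · exact ⟨N₀, ⟨hN₀, subset_rfl⟩, h' hxN⟩
      · exact ⟨N, ⟨hN, h'⟩, hxN⟩

lemma pressing_down {S : Set (Set γ)} (hS : IsStationaryIn A S)
    (f : Set γ → γ) (hf : ∀ N ∈ S, f N ∈ N) :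
    ∃ x : γ, IsStationaryIn A {N ∈ S | f N = x} := by
  by_contra h
  push_neg at h
  have hsub : ∀ x : γ, {N ∈ S | f N = x} ⊆ smallSubsets A := fun x N hN => hS.1 hN.1
  have hclub : ∀ x : γ, ∃ C, IsClubIn A C ∧ {N ∈ S | f N = x} ∩ C = ∅ := by
    intro x
    have hx := h x
    rw [IsStationaryIn] at hx
    push_neg at hx
    obtain ⟨C, hC1, hC2⟩ := hx (hsub x)
    exact ⟨C, hC1, hC2⟩
  choose C hCclub hCdisj using hclub
  set Δ : Set (Set γ) := {N ∈ smallSubsets A | ∀ x ∈ N, N ∈ C x} with hΔ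
  have hΔclub : IsClubIn A Δ := by
    refine ⟨fun N hN => hN.1, ?_, ?_⟩
    · intro N hN
      -- step function
      have step : ∀ P : Set γ, ∃ Q : Set γ,
          P ∈ smallSubsets A → Q ∈ smallSubsets A ∧ P ⊆ Q ∧ ∀ x ∈ P, Q ∈ C x := by
        intro P
        by_cases h' : P ∈ smallSubsets A
        · obtain ⟨D, hD1, hD2⟩ := club_inter_family C hCclub P h'.2
          obtain ⟨Q, hQ1, hQ2⟩ := hD1.2.1 P h'
          exact ⟨Q, fun _ => ⟨hD1.1 hQ1, hQ2, fun x hx => hD2 x hx hQ1⟩⟩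
        · exact ⟨P, fun h'' => absurd h'' h'⟩
      choose st hst using step
      let M : ℕ → Set γ := fun i => Nat.rec N (fun _ Mi => st Mi) i
      have hMs : ∀ i, M (i+1) = st (M i) := fun i => rfl
      have hMsmall : ∀ i, M i ∈ smallSubsets A := by
        intro i
        induction i with
        | zero => exact hN
        | succ i ih => rw [hMs]; exact (hst (M i) ih).1
      have hMsub : ∀ i, M i ⊆ M (i+1) := fun i => (hst (M i) (hMsmall i)).2.1
      have hMmono : Monotone M := monotone_nat_of_le_succ hMsub
      refine ⟨⋃ i, M i, ⟨?_, ?_⟩, Set.subset_iUnion M 0⟩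
      · exact ⟨Set.iUnion_subset fun i => (hMsmall i).1,
          Set.countable_iUnion fun i => (hMsmall i).2⟩
      · intro x hx
        obtain ⟨i, hxi⟩ := Set.mem_iUnion.mp hx
        have hs : ∀ j, ∃ m ∈ {m | i + 1 ≤ m}, j ≤ m := by
          intro j
          exact ⟨max (i+1) j, le_max_left (i+1) j, le_max_right _ _⟩
        obtain ⟨h1, h2, h3, h4⟩ := image_chain hMmono _ hs
        have hmem : M '' {m | i + 1 ≤ m} ⊆ C x := by
          rintro _ ⟨m, hm, rfl⟩
          obtain ⟨m', rfl⟩ := Nat.exists_eq_add_of_le hm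
          -- m = (i+1) + m' ; show M ((i+1)+m') ∈ C x
          induction m' with
          | zero =>
            rw [hMs]
            exact (hst (M i) (hMsmall i)).2.2 x hxi
          | succ m' ih =>
            have : i + 1 + (m' + 1) = (i + 1 + m') + 1 := by ring
            rw [this, hMs]
            exact (hst _ (hMsmall _)).2.2 x (hMmono (show i ≤ i + 1 + m' by omega) hxi)
        have := (hCclub x).2.2 _ hmem h1 h2 h3
        rwa [h4] at this
    · intro D hD hne hcnt hchain
      refine ⟨⟨Set.sUnion_subset fun N hN => (hD hN).1.1,
        Set.Countable.sUnion hcnt fun N hN => (hD hN).1.2⟩, ?_⟩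
      intro x hx
      obtain ⟨N₀, hN₀, hxN₀⟩ := hx
      have hupper : {N ∈ D | N₀ ⊆ N} ⊆ C x := by
        rintro N ⟨hN, hsub'⟩
        exact (hD hN).2 x (hsub' hxN₀)
      have := (hCclub x).2.2 _ hupper ⟨N₀, hN₀, subset_rfl⟩
        (hcnt.mono (fun N hN => hN.1))
        (hchain.mono (fun N hN => hN.1))
      rwa [sUnion_upper_chain hchain hN₀] at this
  obtain ⟨N, hNS, hNΔ⟩ := hS.2 Δ hΔclub
  have : N ∈ {N' ∈ S | f N' = f N} ∩ C (f N) :=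
    ⟨⟨hNS, rfl⟩, hNΔ.2 (f N) (hf N hNS)⟩
  rw [hCdisj (f N)] at this
  exact this

end aux

/- STATEMENT 12: With `X` regular, `𝓑` a point-countable base,
`S₀ = {N countable : closure N ⊄ N}` stationary, `F N ∈ closure N \ N`, and
`U x n` an enumeration of the basic neighborhoods of `x`: for every stationary
`S ⊆ S₀` and every `n` there is a basic open `V` such that
`{N ∈ S : U (F N) n = V}` is stationary. -/
theorem stmt_12 {X : Type*} [TopologicalSpace X] [RegularSpace X]
    (𝓑 : Set (Set X)) (hbase : TopologicalSpace.IsTopologicalBasis 𝓑)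
    (hpc : ∀ x : X, {W ∈ 𝓑 | x ∈ W}.Countable)
    (hstat : IsStationaryIn (Set.univ : Set X)
      {N | N.Countable ∧ (closure N \ N).Nonempty})
    (F : Set X → X)
    (hF : ∀ N : Set X, N.Countable → (closure N \ N).Nonempty →
      F N ∈ closure N \ N)
    (U : X → ℕ → Set X)
    (hU1 : ∀ (x : X) (n : ℕ), U x n ∈ 𝓑 ∧ x ∈ U x n)
    (hU2 : ∀ x : X, ∀ W ∈ 𝓑, x ∈ W → ∃ n : ℕ, U x n = W)
    (S : Set (Set X))
    (hSsub : S ⊆ {N | N.Countable ∧ (closure N \ N).Nonempty})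
    (hSstat : IsStationaryIn (Set.univ : Set X) S) (n : ℕ) :
    ∃ V ∈ 𝓑, IsStationaryIn (Set.univ : Set X) {N ∈ S | U (F N) n = V} := by
  classical
  have hmeet : ∀ N ∈ S, (N ∩ U (F N) n).Nonempty := by
    intro N hN
    obtain ⟨hcnt, hne⟩ := hSsub hN
    have hFN := hF N hcnt hne
    have hopen : IsOpen (U (F N) n) := hbase.isOpen (hU1 (F N) n).1
    have hcl : F N ∈ closure N := hFN.1
    rw [mem_closure_iff] at hcl
    obtain ⟨y, hy1, hy2⟩ := hcl _ hopen (hU1 (F N) n).2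
    exact ⟨y, hy2, hy1⟩
  set f : Set X → X := fun N =>
    if h : (N ∩ U (F N) n).Nonempty then h.choose else F N with hfdef
  have hfmem : ∀ N ∈ S, f N ∈ N ∩ U (F N) n := by
    intro N hN
    have h := hmeet N hN
    simp only [hfdef, dif_pos h]
    exact h.choose_spec
  obtain ⟨x, hxstat⟩ := pressing_down hSstat f (fun N hN => (hfmem N hN).1)
  by_contra hcon
  push_neg at hcon
  set 𝓦 : Set (Set X) := {W ∈ 𝓑 | x ∈ W} with h𝓦
  have h𝓦cnt : 𝓦.Countable := hpc x
  -- the stationary set T := {N ∈ S | f N = x} is nonempty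
  obtain ⟨N₀, hN₀T, _⟩ := hxstat.2 (smallSubsets Set.univ) small_club
  have hUW : ∀ N ∈ S, f N = x → U (F N) n ∈ 𝓦 := by
    intro N hN hfN
    exact ⟨(hU1 (F N) n).1, hfN ▸ (hfmem N hN).2⟩
  have h𝓦ne : 𝓦.Nonempty := ⟨U (F N₀) n, hUW N₀ hN₀T.1 hN₀T.2⟩
  obtain ⟨g, hg⟩ := Set.Countable.exists_eq_range h𝓦cnt h𝓦ne
  have hclub : ∀ k : ℕ, ∃ C, IsClubIn (Set.univ : Set X) C ∧
      {N ∈ S | U (F N) n = g k} ∩ C = ∅ := by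
    intro k
    have hgk : g k ∈ 𝓑 := by
      have : g k ∈ 𝓦 := hg ▸ Set.mem_range_self k
      exact this.1
    have hns := hcon (g k) hgk
    rw [IsStationaryIn] at hns
    push_neg at hns
    exact hns (fun N hN => hSstat.1 hN.1)
  choose C hCclub hCdisj using hclub
  obtain ⟨N, hNT, hNC⟩ := hxstat.2 (⋂ k, C k) (club_iInter C hCclub)
  have hV : U (F N) n ∈ 𝓦 := hUW N hNT.1 hNT.2
  rw [hg] at hV
  obtain ⟨k, hk⟩ := hV
  have : N ∈ {N' ∈ S | U (F N') n = g k} ∩ C k :=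
    ⟨⟨hNT.1, hk.symm⟩, Set.mem_iInter.mp hNC k⟩
  rw [hCdisj k] at this
  exact this
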